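/- Let G be a finite CLT group and let H be a Hall subgroup of G, i.e. a subgroup whose order |H| is coprime to its index [G : H]. Then H is also a CLT group. -/

import Mathlib

/-- A finite group `G` is a CLT group (Converse of Lagrange's Theorem) if for every
divisor `d` of `|G|` there exists a subgroup of `G` of order `d`. -/
def IsCLT (G : Type*) [Group G] : Prop :=
  ∀ d : ℕ, d ∣ Nat.card G → ∃ H : Subgroup G, Nat.card H = d

/-- Theorem 8.6(a): a Hall subgroup of a finite CLT group is a CLT group. -/
theorem hall_subgroup_of_CLT_is_CLT (G : Type*) [Group G] [Finite G] (hG : IsCLT G)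
    (H : Subgroup G) (hHall : Nat.Coprime (Nat.card H) H.index) :
    IsCLT H := by
  intro d hd
  -- d * index divides card G
  have hcard : Nat.card H * H.index = Nat.card G := H.card_mul_index
  have hdvdG : d * H.index ∣ Nat.card G := by
    rw [← hcard]; exact mul_dvd_mul_right hd _
  obtain ⟨K, hK⟩ := hG (d * H.index) hdvdG
  -- L = H ⊓ K
  set L := H ⊓ K with hL
  -- card of subgroupOf equals relindex computation in K
  have hKmul : Nat.card (H.subgroupOf K) * H.relIndex K = Nat.card K :=
    (H.subgroupOf K).card_mul_index
  have hcardLsub : Nat.card (H.subgroupOf K) = Nat.card L := by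
    rw [← Subgroup.inf_subgroupOf_right H K]
    exact Nat.card_congr (Subgroup.subgroupOfEquivOfLe inf_le_right).toEquiv
  have hindex_pos : 0 < H.index := Nat.pos_of_ne_zero (Subgroup.index_ne_zero_of_finite)
  have hL_pos : 0 < Nat.card L := Nat.card_pos
  -- card L divides card H and d * index
  have hLH : Nat.card L ∣ Nat.card H := Subgroup.card_dvd_of_le inf_le_left
  have hLK : Nat.card L ∣ Nat.card K := Subgroup.card_dvd_of_le inf_le_right
  have hLd : Nat.card L ∣ d := by
    have h1 : Nat.card L ∣ d * H.index := hK ▸ hLK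
    have h2 : Nat.Coprime (Nat.card L) H.index := Nat.Coprime.coprime_dvd_left hLH hHall
    exact (Nat.Coprime.dvd_of_dvd_mul_right h2) h1
  -- relindex ≤ index
  have hrel_le : H.relIndex K ≤ H.index := by
    have := Subgroup.relIndex_le_of_le_right (le_top : K ≤ ⊤)
      (by rw [Subgroup.relIndex_top_right]; exact hindex_pos.ne')
    rwa [Subgroup.relIndex_top_right] at this
  -- card L = d
  have hLeq : Nat.card L = d := by
    have heq : Nat.card L * H.relIndex K = d * H.index := by
      rw [← hcardLsub, hKmul, hK]
    have hd_pos : 0 < d := Nat.pos_of_dvd_of_pos hd Nat.card_pos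
    have hge : d ≤ Nat.card L := by
      have h1 : d * H.index ≤ Nat.card L * H.index := by
        calc d * H.index = Nat.card L * H.relIndex K := heq.symm
          _ ≤ Nat.card L * H.index := Nat.mul_le_mul_left _ hrel_le
      exact Nat.le_of_mul_le_mul_right h1 hindex_pos
    exact Nat.le_antisymm (Nat.le_of_dvd hd_pos hLd) hge
  exact ⟨L.subgroupOf H, by
    rw [Nat.card_congr (Subgroup.subgroupOfEquivOfLe inf_le_left).toEquiv, hLeq]⟩
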